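/- Laurent–Massart lower tail bound: if U is a chi-squared random variable with D degrees of freedom, then for any x > 0, Pr[D − U ≥ 2√(Dx)] ≤ exp(−x). -/

import Mathlib

open MeasureTheory ProbabilityTheory
open scoped NNReal ENNReal

lemma my_exp_le_one_add {u : ℝ} (hu : 0 ≤ u) : Real.exp (u - u ^ 2 / 2) ≤ 1 + u := by
  set f : ℝ → ℝ := fun w => (1 + w) * Real.exp (w ^ 2 / 2 - w) with hf
  have key : ∀ v : ℝ, HasDerivAt f (Real.exp (v ^ 2 / 2 - v) * v ^ 2) v := by
    intro v
    have h1 : HasDerivAt (fun w : ℝ => w ^ 2 / 2 - w) (v - 1) v := by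
      have := ((hasDerivAt_pow 2 v).div_const 2).sub (hasDerivAt_id v)
      exact this.congr_deriv (by norm_num)
    have h2 := h1.exp
    have h3 : HasDerivAt (fun w : ℝ => 1 + w) 1 v := (hasDerivAt_id v).const_add 1
    have := h3.mul h2
    exact this.congr_deriv (by ring)
  have mono : MonotoneOn f (Set.Ici (0 : ℝ)) := by
    apply monotoneOn_of_deriv_nonneg (convex_Ici 0)
    · exact ((continuous_const.add continuous_id).mul
        (((continuous_pow 2).div_const 2).sub continuous_id).rexp).continuousOn
    · intro v _
      exact (key v).differentiableAt.differentiableWithinAt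
    · intro v _
      rw [(key v).deriv]
      positivity
  have h0 : f 0 = 1 := by simp [hf]
  have h1 : (1 : ℝ) ≤ f u := by
    rw [← h0]
    exact mono Set.self_mem_Ici hu hu
  have hpos : 0 < Real.exp (u ^ 2 / 2 - u) := Real.exp_pos _
  have hrw : u - u ^ 2 / 2 = -(u ^ 2 / 2 - u) := by ring
  rw [hrw, Real.exp_neg, inv_le_iff_one_le_mul₀ hpos]
  calc (1 : ℝ) ≤ f u := h1
    _ = (1 + u) * Real.exp (u ^ 2 / 2 - u) := rfl

lemma my_gauss_sq {t : ℝ} (ht : 0 ≤ t) :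
    ∫ y, Real.exp (-(t * y ^ 2)) ∂(gaussianReal 0 1) = Real.sqrt (1 / (1 + 2 * t)) := by
  rw [gaussianReal_of_var_ne_zero 0 one_ne_zero]
  have hpdf : gaussianPDF 0 1
      = fun x => ((Real.toNNReal (gaussianPDFReal 0 1 x) : ℝ≥0) : ℝ≥0∞) := by
    ext x; simp [gaussianPDF, ENNReal.ofReal]
  rw [hpdf, integral_withDensity_eq_integral_smul
    ((measurable_gaussianPDFReal 0 1).real_toNNReal)]
  have hπ : (0 : ℝ) < Real.pi := Real.pi_pos
  have heq : ∀ x : ℝ, (Real.toNNReal (gaussianPDFReal 0 1 x) : ℝ≥0) • Real.exp (-(t * x ^ 2))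
      = (Real.sqrt (2 * Real.pi))⁻¹ * Real.exp (-(t + 1 / 2) * x ^ 2) := by
    intro x
    rw [NNReal.smul_def, smul_eq_mul, Real.coe_toNNReal _ (gaussianPDFReal_nonneg 0 1 x)]
    simp only [gaussianPDFReal, NNReal.coe_one, mul_one, sub_zero]
    rw [mul_assoc, ← Real.exp_add]
    congr 2
    ring
  simp_rw [heq]
  rw [integral_const_mul, integral_gaussian]
  rw [← Real.sqrt_inv, ← Real.sqrt_mul (by positivity)]
  congr 1
  have h1 : t + 1 / 2 ≠ 0 := by positivity
  have h2 : 1 + 2 * t ≠ 0 := by positivity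
  field_simp
  ring

/-- Laurent–Massart lower tail bound: if `U` is a chi-squared random variable with `D` degrees
of freedom (the sum of squares of `D` independent standard normals), then for any `x > 0`,
`Pr[D − U ≥ 2√(Dx)] ≤ exp(−x)`. -/
theorem laurent_massart_lower_tail
    {Ω : Type*} [MeasurableSpace Ω] (μ : Measure Ω) [IsProbabilityMeasure μ]
    (D : ℕ) (hD : 0 < D) (Z : Fin D → Ω → ℝ)
    (hmeas : ∀ i, Measurable (Z i))
    (hindep : iIndepFun Z μ)
    (hgauss : ∀ i, μ.map (Z i) = gaussianReal 0 1)
    (x : ℝ) (hx : 0 < x) :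
    μ {ω | 2 * Real.sqrt ((D : ℝ) * x) ≤ (D : ℝ) - ∑ i, (Z i ω) ^ 2}
      ≤ ENNReal.ofReal (Real.exp (-x)) := by
  have hD0 : (0 : ℝ) < D := by exact_mod_cast hD
  set t := Real.sqrt (x / D) with htdef
  have ht0 : 0 < t := Real.sqrt_pos.mpr (by positivity)
  have ht2 : t ^ 2 = x / D := Real.sq_sqrt (by positivity)
  set Y : Fin D → Ω → ℝ := fun i ω => 1 - Z i ω ^ 2 with hY
  have hYmeas : ∀ i, Measurable (Y i) :=
    fun i => measurable_const.sub ((hmeas i).pow_const 2)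
  have hYindep : iIndepFun Y μ :=
    hindep.comp (fun _ => fun y : ℝ => 1 - y ^ 2)
      (fun _ => measurable_const.sub (measurable_id.pow_const 2))
  -- mgf of each summand
  have hmgf : ∀ i, mgf (Y i) μ t = Real.exp t * Real.sqrt (1 / (1 + 2 * t)) := by
    intro i
    rw [mgf]
    have hexp : ∀ ω, Real.exp (t * Y i ω)
        = Real.exp t * Real.exp (-(t * Z i ω ^ 2)) := by
      intro ω
      rw [← Real.exp_add]
      congr 1
      simp only [hY]
      ring
    simp_rw [hexp]
    rw [integral_const_mul]
    have hcont : AEStronglyMeasurable (fun y : ℝ => Real.exp (-(t * y ^ 2)))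
        (μ.map (Z i)) := Continuous.aestronglyMeasurable (by continuity)
    rw [← integral_map (hmeas i).aemeasurable hcont, hgauss i, my_gauss_sq ht0.le]
  -- mgf of the sum
  have hsum : mgf (∑ i, Y i) μ t
      = (Real.exp t * Real.sqrt (1 / (1 + 2 * t))) ^ D := by
    rw [hYindep.mgf_sum hYmeas]
    simp [hmgf, Finset.card_univ]
  have hXval : ∀ ω, (∑ i, Y i) ω = (D : ℝ) - ∑ i, Z i ω ^ 2 := by
    intro ω
    simp [hY, Finset.sum_apply, Finset.sum_sub_distrib]
  have hset : {ω | 2 * Real.sqrt ((D : ℝ) * x) ≤ (D : ℝ) - ∑ i, (Z i ω) ^ 2}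
      = {ω | 2 * Real.sqrt ((D : ℝ) * x) ≤ (∑ i, Y i) ω} := by
    ext ω
    simp only [Set.mem_setOf_eq]; rw [hXval ω]
  -- integrability of the exponential
  have hXmeas : Measurable (fun ω => (∑ i, Y i) ω) := by
    simp_rw [Finset.sum_apply]
    exact Finset.measurable_sum _ (fun i _ => hYmeas i)
  have hint : Integrable (fun ω => Real.exp (t * (∑ i, Y i) ω)) μ := by
    refine Integrable.mono' (integrable_const (Real.exp (t * D)))
      ((hXmeas.const_mul t).exp).aestronglyMeasurable ?_
    filter_upwards with ω
    rw [Real.norm_eq_abs, abs_of_pos (Real.exp_pos _), Real.exp_le_exp]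
    refine mul_le_mul_of_nonneg_left ?_ ht0.le
    rw [hXval ω]
    have hnn : (0 : ℝ) ≤ ∑ i, Z i ω ^ 2 :=
      Finset.sum_nonneg (fun i _ => sq_nonneg _)
    linarith
  -- Chernoff bound
  have hcher := measure_ge_le_exp_mul_mgf (μ := μ) (X := ∑ i, Y i)
    (2 * Real.sqrt ((D : ℝ) * x)) ht0.le hint
  rw [hsum] at hcher
  -- numeric computations
  have htx : t * Real.sqrt ((D : ℝ) * x) = x := by
    rw [htdef, ← Real.sqrt_mul (by positivity)]
    rw [show x / (D : ℝ) * ((D : ℝ) * x) = x ^ 2 by field_simp]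
    exact Real.sqrt_sq hx.le
  have hDt2 : (D : ℝ) * t ^ 2 = x := by
    rw [ht2]; field_simp
  -- per-factor bound : exp t * sqrt (1/(1+2t)) ≤ exp (t^2)
  have hfac : Real.exp t * Real.sqrt (1 / (1 + 2 * t)) ≤ Real.exp (t ^ 2) := by
    have hk := my_exp_le_one_add (u := 2 * t) (by positivity)
    have hk' : Real.exp (2 * t - 2 * t ^ 2) ≤ 1 + 2 * t := by
      convert hk using 2; ring
    have h1p : (0 : ℝ) < 1 + 2 * t := by positivity
    have h5 : 1 / (1 + 2 * t) ≤ Real.exp (2 * t ^ 2 - 2 * t) := by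
      rw [div_le_iff₀ h1p]
      have hmul := mul_le_mul_of_nonneg_left hk' (Real.exp_pos (2 * t ^ 2 - 2 * t)).le
      have hone : Real.exp (2 * t ^ 2 - 2 * t) * Real.exp (2 * t - 2 * t ^ 2) = 1 := by
        rw [← Real.exp_add]; ring_nf; exact Real.exp_zero
      linarith
    have hsq : Real.exp (2 * t ^ 2 - 2 * t) = (Real.exp (t ^ 2 - t)) ^ 2 := by
      rw [← Real.exp_nat_mul]; congr 1; push_cast; ring
    have h6 : Real.sqrt (1 / (1 + 2 * t)) ≤ Real.exp (t ^ 2 - t) := by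
      calc Real.sqrt (1 / (1 + 2 * t)) ≤ Real.sqrt (Real.exp (2 * t ^ 2 - 2 * t)) :=
            Real.sqrt_le_sqrt h5
        _ = Real.exp (t ^ 2 - t) := by
            rw [hsq, Real.sqrt_sq (Real.exp_pos _).le]
    calc Real.exp t * Real.sqrt (1 / (1 + 2 * t))
        ≤ Real.exp t * Real.exp (t ^ 2 - t) :=
          mul_le_mul_of_nonneg_left h6 (Real.exp_pos _).le
      _ = Real.exp (t ^ 2) := by rw [← Real.exp_add]; ring_nf
  have hnum : Real.exp (-t * (2 * Real.sqrt ((D : ℝ) * x)))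
      * (Real.exp t * Real.sqrt (1 / (1 + 2 * t))) ^ D ≤ Real.exp (-x) := by
    have h7 : (Real.exp t * Real.sqrt (1 / (1 + 2 * t))) ^ D
        ≤ (Real.exp (t ^ 2)) ^ D := by
      refine pow_le_pow_left₀ ?_ hfac D
      positivity
    have h8 : (Real.exp (t ^ 2)) ^ D = Real.exp x := by
      rw [← Real.exp_nat_mul, hDt2]
    have h9 : Real.exp (-t * (2 * Real.sqrt ((D : ℝ) * x))) = Real.exp (-(2 * x)) := by
      congr 1
      rw [show -t * (2 * Real.sqrt ((D : ℝ) * x)) = -(2 * (t * Real.sqrt ((D : ℝ) * x))) by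
        ring, htx]
    calc Real.exp (-t * (2 * Real.sqrt ((D : ℝ) * x)))
          * (Real.exp t * Real.sqrt (1 / (1 + 2 * t))) ^ D
        ≤ Real.exp (-(2 * x)) * Real.exp x := by
          rw [h9]; exact mul_le_mul_of_nonneg_left (h7.trans_eq h8) (Real.exp_pos _).le
      _ = Real.exp (-x) := by rw [← Real.exp_add]; ring_nf
  -- conclude
  rw [hset]
  have hfin : μ {ω | 2 * Real.sqrt ((D : ℝ) * x) ≤ (∑ i, Y i) ω} ≠ ⊤ := measure_ne_top μ _
  rw [← ENNReal.ofReal_toReal hfin]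
  exact ENNReal.ofReal_le_ofReal (hcher.trans hnum)
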